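/- Let s be a positive integer and let G be a graph that is K_4-free and SDK_s-free. Let v be a vertex of G and let X be a set of neighbors of v such that for every x ∈ X there exists a vertex y_x with y_x ≠ v, y_x not adjacent to v, and such that the set of neighbors of y_x inside X is exactly {x}. Then |X| ≤ R(4, R(4, s)). -/

import Mathlib

open SimpleGraph

/-- The Ramsey number `R(k, l)`: the least `N` such that every finite simple graph with at
least `N` vertices contains a clique with `k` vertices or an independent set with `l`
vertices (an independent set of size `l` is a clique of size `l` in the complement). -/
noncomputable def ramseyNumber (k l : ℕ) : ℕ :=
  sInf {N | ∀ (V : Type) [Fintype V] (G : SimpleGraph V),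
    N ≤ Fintype.card V →
      (∃ S : Finset V, G.IsNClique k S) ∨ (∃ S : Finset V, Gᶜ.IsNClique l S)}

/-- The one-subdivision of `K_{1,s}`: a center `Sum.inl ()`, middle vertices
`Sum.inr (Sum.inl i)` and leaves `Sum.inr (Sum.inr i)`; the center is adjacent to every
middle vertex, and the `i`-th middle vertex is adjacent to the `i`-th leaf. -/
def SDK (s : ℕ) : SimpleGraph (Unit ⊕ Fin s ⊕ Fin s) :=
  SimpleGraph.fromRel (fun a b =>
    (∃ i : Fin s, a = Sum.inl () ∧ b = Sum.inr (Sum.inl i)) ∨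
    (∃ i : Fin s, a = Sum.inr (Sum.inl i) ∧ b = Sum.inr (Sum.inr i)))

/-- `G` is `H`-free: no induced subgraph of `G` is isomorphic to `H`. -/
def IsFree {W V : Type*} (H : SimpleGraph W) (G : SimpleGraph V) : Prop :=
  ¬ Nonempty (H ↪g G)

/-- `nbhd G S` is the set of all vertices having a neighbour in `S`. -/
def nbhd {V : Type*} (G : SimpleGraph V) (S : Set V) : Set V :=
  {v | ∃ s ∈ S, G.Adj s v}


def RamseyProp (k l N : ℕ) : Prop :=
  ∀ (V : Type) [Fintype V] (G : SimpleGraph V),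
    N ≤ Fintype.card V →
      (∃ S : Finset V, G.IsNClique k S) ∨ (∃ S : Finset V, Gᶜ.IsNClique l S)

lemma comap_clique {V : Type} (G : SimpleGraph V) (p : V → Prop) (k : ℕ)
    (S : Finset (Subtype p)) (h : (G.comap (Subtype.val)).IsNClique k S) :
    G.IsNClique k (S.map (Function.Embedding.subtype p)) := by
  constructor
  · intro a ha b hb hne
    simp only [Finset.coe_map, Set.mem_image, Finset.mem_coe] at ha hb
    obtain ⟨a', ha', rfl⟩ := ha
    obtain ⟨b', hb', rfl⟩ := hb
    have hab : a' ≠ b' := fun h => hne (by simp [h])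
    exact h.1 ha' hb' hab
  · simpa using h.2

lemma comap_compl_clique {V : Type} (G : SimpleGraph V) (p : V → Prop) (k : ℕ)
    (S : Finset (Subtype p)) (h : (G.comap (Subtype.val))ᶜ.IsNClique k S) :
    Gᶜ.IsNClique k (S.map (Function.Embedding.subtype p)) := by
  constructor
  · intro a ha b hb hne
    simp only [Finset.coe_map, Set.mem_image, Finset.mem_coe] at ha hb
    obtain ⟨a', ha', rfl⟩ := ha
    obtain ⟨b', hb', rfl⟩ := hb
    have hab : a' ≠ b' := fun h => hne (by simp [h])
    have := h.1 ha' hb' hab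
    rw [compl_adj] at this ⊢
    exact ⟨hne, by simpa using this.2⟩
  · simpa using h.2

lemma ramsey_exists (k l : ℕ) : ∃ N, RamseyProp k l N := by
  induction k generalizing l with
  | zero =>
    exact ⟨0, fun V _ G _ => Or.inl ⟨∅, by simp [isNClique_empty]⟩⟩
  | succ k IHk =>
    induction l with
    | zero =>
      exact ⟨0, fun V _ G _ => Or.inr ⟨∅, by simp [isNClique_empty]⟩⟩
    | succ l IHl =>
      obtain ⟨A, hA⟩ := IHk (l + 1)
      obtain ⟨B, hB⟩ := IHl
      refine ⟨A + B + 1, ?_⟩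
      intro V _ G hcard
      classical
      have hpos : 0 < Fintype.card V := by omega
      obtain ⟨v⟩ := Fintype.card_pos_iff.mp hpos
      have hvNv : v ∉ G.neighborFinset v := by simp
      have hcards : (G.neighborFinset v).card
          + (Finset.univ \ insert v (G.neighborFinset v)).card + 1 = Fintype.card V := by
        have hsub : insert v (G.neighborFinset v) ⊆ Finset.univ := Finset.subset_univ _
        have h1 : (Finset.univ \ insert v (G.neighborFinset v)).card
            = Fintype.card V - ((G.neighborFinset v).card + 1) := by
          rw [Finset.card_sdiff_of_subset hsub, Finset.card_insert_of_notMem hvNv, Finset.card_univ]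
        have h2 : (G.neighborFinset v).card + 1 ≤ Fintype.card V := by
          rw [← Finset.card_insert_of_notMem hvNv, ← Finset.card_univ]
          exact Finset.card_le_card (Finset.subset_univ _)
        omega
      rcases le_or_gt A (G.neighborFinset v).card with hle | hlt
      · -- many neighbours
        have := hA {x // x ∈ G.neighborFinset v} (G.comap Subtype.val)
          (by rw [Fintype.card_coe]; exact hle)
        rcases this with ⟨S, hS⟩ | ⟨S, hS⟩
        · -- k-clique among neighbours; add v
          have hT := comap_clique G _ k S hS
          have hvT : v ∉ S.map (Function.Embedding.subtype _) := by
            intro hv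
            rw [Finset.mem_map] at hv
            obtain ⟨a, _, ha⟩ := hv
            have h4 : (a : V) ∈ G.neighborFinset v := a.2
            simp only [Function.Embedding.coe_subtype] at ha
            rw [ha] at h4
            exact hvNv h4
          refine Or.inl ⟨insert v _, hT.insert ?_⟩
          intro b hb
          rw [Finset.mem_map] at hb
          obtain ⟨a, _, rfl⟩ := hb
          have h3 : (a : V) ∈ G.neighborFinset v := a.2
          rw [mem_neighborFinset] at h3
          exact h3
        · exact Or.inr ⟨_, comap_compl_clique G _ (l+1) S hS⟩
      · have hleB : B ≤ (Finset.univ \ insert v (G.neighborFinset v)).card := by omega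
        have := hB {x // x ∈ Finset.univ \ insert v (G.neighborFinset v)}
          (G.comap Subtype.val) (by rw [Fintype.card_coe]; exact hleB)
        rcases this with ⟨S, hS⟩ | ⟨S, hS⟩
        · exact Or.inl ⟨_, comap_clique G _ (k+1) S hS⟩
        · have hT := comap_compl_clique G _ l S hS
          have hMprop : ∀ b ∈ S.map (Function.Embedding.subtype _), b ≠ v ∧ ¬ G.Adj v b := by
            intro b hb
            rw [Finset.mem_map] at hb
            obtain ⟨a, _, rfl⟩ := hb
            have h3 : (a : V) ∈ Finset.univ \ insert v (G.neighborFinset v) := a.2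
            rw [Finset.mem_sdiff, Finset.mem_insert] at h3
            push_neg at h3
            refine ⟨h3.2.1, ?_⟩
            rw [← mem_neighborFinset]
            exact h3.2.2
          have hvT : v ∉ S.map (Function.Embedding.subtype _) := fun hv => (hMprop v hv).1 rfl
          refine Or.inr ⟨insert v _, hT.insert ?_⟩
          intro b hb
          obtain ⟨hbv, hnadj⟩ := hMprop b hb
          rw [compl_adj]
          exact ⟨fun h => hbv h.symm, hnadj⟩

lemma ramsey_key (k l : ℕ) : RamseyProp k l (ramseyNumber k l) := by
  obtain ⟨N, hN⟩ := ramsey_exists k l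
  exact Nat.sInf_mem (⟨N, hN⟩ : Set.Nonempty {N | RamseyProp k l N})

lemma clique_embedding {V : Type} (G : SimpleGraph V) {n : ℕ} {S : Finset V}
    (h : G.IsNClique n S) : Nonempty (completeGraph (Fin n) ↪g G) := by
  classical
  let e : Fin n ≃ S := (S.equivFinOfCardEq h.2).symm
  refine ⟨⟨⟨fun i => ((e i : S) : V), ?_⟩, ?_⟩⟩
  · intro a b hab
    exact e.injective (Subtype.ext hab)
  · intro a b
    simp only [Function.Embedding.coeFn_mk, completeGraph, top_adj]
    constructor
    · intro hadj hab
      rw [hab] at hadj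
      exact G.irrefl hadj
    · intro hne
      refine h.1 (e a).2 (e b).2 ?_
      intro heq
      exact hne (e.injective (Subtype.ext heq))

lemma sdk_embedding {V : Type} (G : SimpleGraph V) (s : ℕ) (v : V) (af bf : Fin s → V)
    (hainj : Function.Injective af) (hbinj : Function.Injective bf)
    (hav : ∀ i, G.Adj v (af i)) (hbv : ∀ i, ¬ G.Adj (bf i) v) (hbvne : ∀ i, bf i ≠ v)
    (hba : ∀ i, G.Adj (bf i) (af i))
    (haa : ∀ i j, i ≠ j → ¬ G.Adj (af i) (af j))
    (hbb : ∀ i j, i ≠ j → ¬ G.Adj (bf i) (bf j))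
    (hba' : ∀ i j, i ≠ j → ¬ G.Adj (bf i) (af j)) :
    Nonempty (SDK s ↪g G) := by
  have hvai : ∀ i, v ≠ af i := fun i => (hav i).ne
  have hab : ∀ i j, af i ≠ bf j := by
    intro i j h
    exact hbv j (h ▸ (hav i)).symm
  refine ⟨⟨⟨Sum.elim (fun _ => v) (Sum.elim af bf), ?_⟩, ?_⟩⟩
  · rintro (⟨⟩ | i | i) (⟨⟩ | j | j) h <;> simp only [Sum.elim_inl, Sum.elim_inr] at h
    · rfl
    · exact absurd h (hvai j)
    · exact absurd h.symm (hbvne j)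
    · exact absurd h.symm (hvai i)
    · rw [hainj h]
    · exact absurd h (hab i j)
    · exact absurd h (hbvne i)
    · exact absurd h.symm (hab j i)
    · rw [hbinj h]
  · rintro (⟨⟩ | i | i) (⟨⟩ | j | j) <;>
      simp only [Function.Embedding.coeFn_mk, Sum.elim_inl, Sum.elim_inr, SDK,
        fromRel_adj, Sum.inr.injEq, Sum.inl.injEq, ne_eq, reduceCtorEq,
        Sum.elim_inr, exists_eq_left, exists_and_left, exists_eq_left',
        false_and, and_false, or_false, false_or, exists_false, or_self,
        not_false_eq_true, true_and, and_true, not_true_eq_false, iff_false,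
        exists_eq', exists_const]
    · simp [G.irrefl]
    · exact iff_true_intro (hav j)
    · exact fun h => hbv j h.symm
    · exact iff_true_intro (hav i).symm
    · intro h
      rcases eq_or_ne i j with rfl | hne
      · exact G.irrefl h
      · exact haa i j hne h
    · constructor
      · intro h
        by_contra hne
        exact hba' j i (Ne.symm (fun e => hne e.symm)) h.symm
      · rintro rfl
        exact (hba j).symm
    · exact hbv i
    · constructor
      · intro h
        by_contra hne
        exact hba' i j hne h
      · rintro rfl
        exact hba i
    · intro h
      rcases eq_or_ne i j with rfl | hne
      · exact G.irrefl h
      · exact hbb i j hne h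

theorem stmt1 (s : ℕ) (hs : 1 ≤ s) (V : Type) [Fintype V] (G : SimpleGraph V)
    (hK4 : IsFree (completeGraph (Fin 4)) G) (hSDK : IsFree (SDK s) G)
    (v : V) (X : Finset V) (hX : ∀ x ∈ X, G.Adj v x)
    (hpriv : ∀ x ∈ X, ∃ y : V, y ≠ v ∧ ¬ G.Adj y v ∧
      {z : V | z ∈ X ∧ G.Adj y z} = {x}) :
    X.card ≤ ramseyNumber 4 (ramseyNumber 4 s) := by
  classical
  by_contra hcon
  push_neg at hcon
  rcases ramsey_key 4 (ramseyNumber 4 s) {x // x ∈ X} (G.comap Subtype.val)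
      (by rw [Fintype.card_coe]; omega) with ⟨S, hS⟩ | ⟨I, hI⟩
  · exact hK4 (clique_embedding G (comap_clique G _ 4 S hS))
  · have hIc : Gᶜ.IsNClique (ramseyNumber 4 s)
        (I.map (Function.Embedding.subtype _)) := comap_compl_clique G _ _ I hI
    have hpriv' : ∀ x : {x // x ∈ X}, ∃ y : V, y ≠ v ∧ ¬ G.Adj y v ∧
        {z : V | z ∈ X ∧ G.Adj y z} = {(x : V)} := fun x => hpriv x x.2
    choose yfun hy1 hy2 hy3 using hpriv'
    have hyadj : ∀ x, G.Adj (yfun x) (x : V) := by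
      intro x
      have hm : (x : V) ∈ {z : V | z ∈ X ∧ G.Adj (yfun x) z} := by rw [hy3]; rfl
      exact hm.2
    have hyuniq : ∀ (x : {x // x ∈ X}) (z : V), z ∈ X → G.Adj (yfun x) z → z = (x : V) := by
      intro x z hz hadj
      have hm : z ∈ {z : V | z ∈ X ∧ G.Adj (yfun x) z} := ⟨hz, hadj⟩
      rwa [hy3] at hm
    have hyinj : Function.Injective yfun := by
      intro a b hab
      exact Subtype.ext (hyuniq b (a : V) a.2 (hab ▸ hyadj a))
    have hJcard : (I.image yfun).card = ramseyNumber 4 s := by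
      rw [Finset.card_image_of_injective _ hyinj, hI.2]
    rcases ramsey_key 4 s {w // w ∈ I.image yfun} (G.comap Subtype.val)
        (by rw [Fintype.card_coe, hJcard]) with ⟨S, hS⟩ | ⟨T, hT⟩
    · exact hK4 (clique_embedding G (comap_clique G _ 4 S hS))
    · let e : Fin s ≃ T := (T.equivFinOfCardEq hT.2).symm
      have hpre : ∀ i : Fin s, ∃ x : {x // x ∈ X}, x ∈ I ∧
          yfun x = (((e i : T) : {w // w ∈ I.image yfun}) : V) := by
        intro i
        have hm : (((e i : T) : {w // w ∈ I.image yfun}) : V) ∈ I.image yfun :=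
          ((e i : T) : {w // w ∈ I.image yfun}).2
        rw [Finset.mem_image] at hm
        obtain ⟨x, hx, hxy⟩ := hm
        exact ⟨x, hx, hxy⟩
      choose xf hxfI hxfy using hpre
      set af : Fin s → V := fun i => ((xf i : {x // x ∈ X}) : V) with haf
      set bf : Fin s → V := fun i => (((e i : T) : {w // w ∈ I.image yfun}) : V) with hbf
      have hbinj : Function.Injective bf := by
        intro i j hij
        exact e.injective (Subtype.ext (Subtype.ext hij))
      have hxfinj : Function.Injective xf := by
        intro i j hij
        apply hbinj
        rw [hbf]
        simp only
        rw [← hxfy i, ← hxfy j, hij]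
      have hainj : Function.Injective af := by
        intro i j hij
        exact hxfinj (Subtype.ext hij)
      have hbyf : ∀ i, bf i = yfun (xf i) := fun i => (hxfy i).symm
      have hav : ∀ i, G.Adj v (af i) := fun i => hX _ (xf i).2
      have hbv : ∀ i, ¬ G.Adj (bf i) v := by
        intro i
        rw [hbyf i]
        exact hy2 (xf i)
      have hbvne : ∀ i, bf i ≠ v := by
        intro i
        rw [hbyf i]
        exact hy1 (xf i)
      have hba : ∀ i, G.Adj (bf i) (af i) := by
        intro i
        rw [hbyf i]
        exact hyadj (xf i)
      have haa : ∀ i j, i ≠ j → ¬ G.Adj (af i) (af j) := by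
        intro i j hne hadj
        have hne' : xf i ≠ xf j := fun h => hne (hxfinj h)
        have hmi : (xf i : {x // x ∈ X}) ∈ (I : Set {x // x ∈ X}) := hxfI i
        have hmj : (xf j : {x // x ∈ X}) ∈ (I : Set {x // x ∈ X}) := hxfI j
        have := hI.1 hmi hmj hne'
        rw [compl_adj] at this
        exact this.2 hadj
      have hbb : ∀ i j, i ≠ j → ¬ G.Adj (bf i) (bf j) := by
        intro i j hne hadj
        have hne' : ((e i : T) : {w // w ∈ I.image yfun}) ≠ (e j : T) := by
          intro h
          exact hne (e.injective (Subtype.ext h))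
        have hmi : ((e i : T) : {w // w ∈ I.image yfun}) ∈ (T : Set _) := (e i).2
        have hmj : ((e j : T) : {w // w ∈ I.image yfun}) ∈ (T : Set _) := (e j).2
        have := hT.1 hmi hmj hne'
        rw [compl_adj] at this
        exact this.2 hadj
      have hba' : ∀ i j, i ≠ j → ¬ G.Adj (bf i) (af j) := by
        intro i j hne hadj
        have h1 : af j = af i := by
          rw [haf]
          simp only
          apply hyuniq (xf i) _ (xf j).2
          rw [← hbyf i]
          exact hadj
        exact hne (hainj h1.symm).symm.symm
      exact hSDK (sdk_embedding G s v af bf hainj hbinj hav hbv hbvne hba haa hbb hba')
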